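/- For g ≥ 2, maps α_i : {0,…,g−1} → ℝ, indices i, j ≥ 0, integers 0 ≤ m < n ≤ g−1 (with n < g), and β ∈ ℝ, one has |Σ_{0≤k<g} e(α_{i+j}(k) − βk)| ≤ g·exp(−(8/g)·‖α_{i+j}(m) − α_{i+j}(n) − β(m−n)‖²), where ‖x‖ denotes the distance from x to the nearest integer. -/

import Mathlib

/-- `e(t) = exp(2πit)`. -/
noncomputable def eC (t : ℝ) : ℂ := Complex.exp (2 * (Real.pi : ℂ) * Complex.I * (t : ℂ))

/-- Distance from `x` to the nearest integer. -/
noncomputable def nint (x : ℝ) : ℝ := |x - round x|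

open Real Finset

lemma eC_eq (t : ℝ) : eC t = Complex.exp ((2 * π * t : ℝ) * Complex.I) := by
  rw [eC]; push_cast; ring_nf

lemma abs_eC (t : ℝ) : ‖eC t‖ = 1 := by
  rw [eC_eq, Complex.norm_exp_ofReal_mul_I]

lemma eC_add (a b : ℝ) : eC (a + b) = eC a * eC b := by
  rw [eC, eC, eC, ← Complex.exp_add]; push_cast; ring_nf

lemma abs_one_add_eC (x : ℝ) : ‖1 + eC x‖ = 2 * |Real.cos (π * x)| := by
  rw [eC_eq, Complex.exp_mul_I, ← Complex.ofReal_cos, ← Complex.ofReal_sin]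
  have h1 : (1 : ℂ) + (((Real.cos (2 * π * x) : ℝ) : ℂ) + ((Real.sin (2 * π * x) : ℝ) : ℂ) * Complex.I)
      = ((1 + Real.cos (2 * π * x) : ℝ) : ℂ) + ((Real.sin (2 * π * x) : ℝ) : ℂ) * Complex.I := by
    push_cast; ring
  rw [h1, Complex.norm_add_mul_I]
  have h2 : (1 + Real.cos (2 * π * x)) ^ 2 + Real.sin (2 * π * x) ^ 2
      = (2 * |Real.cos (π * x)|) ^ 2 := by
    have hs := Real.sin_sq_add_cos_sq (2 * π * x)
    have hc : Real.cos (2 * π * x) = 2 * Real.cos (π * x) ^ 2 - 1 := by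
      have := Real.cos_two_mul (π * x); rw [← this]; ring_nf
    have habs : |Real.cos (π * x)| ^ 2 = Real.cos (π * x) ^ 2 := sq_abs _
    nlinarith [hs, hc, habs]
  rw [h2, Real.sqrt_sq (by positivity)]

lemma sin_lower (t : ℝ) (h0 : 0 ≤ t) (h1 : t ≤ 1 / 2) :
    Real.sqrt 2 * t ≤ Real.sin (π * t / 2) := by
  have hpi := Real.pi_pos
  have hx : (0 : ℝ) ∈ Set.Icc (0 : ℝ) π := ⟨le_refl _, by positivity⟩
  have hy : π / 4 ∈ Set.Icc (0 : ℝ) π := ⟨by positivity, by linarith⟩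
  have key := strictConcaveOn_sin_Icc.concaveOn.2 hx hy
    (show (0:ℝ) ≤ 1 - 2 * t by linarith) (show (0:ℝ) ≤ 2 * t by linarith)
    (show (1 - 2 * t) + 2 * t = 1 by ring)
  simp only [smul_eq_mul, Real.sin_zero, mul_zero, zero_add, Real.sin_pi_div_four] at key
  calc Real.sqrt 2 * t = 2 * t * (Real.sqrt 2 / 2) := by ring
    _ ≤ Real.sin (2 * t * (π / 4)) := key
    _ = Real.sin (π * t / 2) := by ring_nf

lemma cos_pi_le (t : ℝ) (h0 : 0 ≤ t) (h1 : t ≤ 1 / 2) :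
    Real.cos (π * t) ≤ 1 - 4 * t ^ 2 := by
  have hsin := sin_lower t h0 h1
  have h2 : Real.cos (π * t) = 1 - 2 * Real.sin (π * t / 2) ^ 2 := by
    have := Real.cos_two_mul (π * t / 2)
    have h3 : 2 * (π * t / 2) = π * t := by ring
    rw [h3] at this
    rw [this, Real.cos_sq']; ring
  have hsq : 2 * t ^ 2 ≤ Real.sin (π * t / 2) ^ 2 := by
    have hnn : 0 ≤ Real.sqrt 2 * t := by positivity
    have := mul_self_le_mul_self hnn hsin
    have h2' : Real.sqrt 2 * t * (Real.sqrt 2 * t) = 2 * t ^ 2 := by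
      have := Real.sq_sqrt (by norm_num : (2:ℝ) ≥ 0)
      nlinarith [Real.sq_sqrt (show (0:ℝ) ≤ 2 by norm_num)]
    nlinarith
  linarith [h2, hsq]

lemma abs_cos_pi_le (x : ℝ) : |Real.cos (π * x)| ≤ 1 - 4 * nint x ^ 2 := by
  set r := x - round x with hr
  have hround : |r| ≤ 1 / 2 := abs_sub_round x
  have hx : π * x = π * r + round x * π := by rw [hr]; push_cast; ring
  have hcos : Real.cos (π * x) = (-1) ^ (round x) * Real.cos (π * r) := by
    rw [hx, Real.cos_add_int_mul_pi]
  have hone : |((-1 : ℝ)) ^ round x| = 1 := by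
    rcases Int.even_or_odd (round x) with h | h
    · rw [h.neg_one_zpow, abs_one]
    · rw [h.neg_one_zpow, abs_neg, abs_one]
  have habs : |Real.cos (π * x)| = |Real.cos (π * r)| := by
    rw [hcos, abs_mul, hone, one_mul]
  have hcr : |Real.cos (π * r)| = Real.cos (π * |r|) := by
    rcases abs_cases r with ⟨h, _⟩ | ⟨h, _⟩
    · rw [h, abs_of_nonneg]
      apply Real.cos_nonneg_of_mem_Icc
      constructor
      · nlinarith [Real.pi_pos, abs_nonneg r, neg_abs_le r, hround]
      · nlinarith [Real.pi_pos, le_abs_self r, hround]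
    · rw [h, ← Real.cos_neg (π * r)]
      rw [abs_of_nonneg]
      · ring_nf
      · rw [Real.cos_neg]
        apply Real.cos_nonneg_of_mem_Icc
        constructor
        · nlinarith [Real.pi_pos, neg_abs_le r, hround]
        · nlinarith [Real.pi_pos, le_abs_self r, hround]
    
  rw [habs, hcr]
  have : nint x = |r| := rfl
  rw [this]
  exact cos_pi_le _ (abs_nonneg r) hround

theorem phi_bound (g : ℕ) (hg : 2 ≤ g) (α : ℕ → ℕ → ℝ) (i j m n : ℕ)
    (hmn : m < n) (hn : n < g) (β : ℝ) :
    ‖∑ k ∈ Finset.range g, eC (α (i + j) k - β * k)‖ ≤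
      (g : ℝ) * Real.exp (-(8 / (g : ℝ)) *
        nint (α (i + j) m - α (i + j) n - β * ((m : ℝ) - n)) ^ 2) := by
  set A : ℕ → ℝ := α (i + j) with hA
  set δ : ℝ := A m - A n - β * ((m : ℝ) - n) with hδ
  set t : ℝ := nint δ with ht
  set f : ℕ → ℂ := fun k => eC (A k - β * k) with hf
  have hmem : ({m, n} : Finset ℕ) ⊆ Finset.range g := by
    intro k hk
    simp only [Finset.mem_insert, Finset.mem_singleton] at hk
    rcases hk with rfl | rfl <;> simp [Finset.mem_range] <;> omega
  have hne : m ≠ n := Nat.ne_of_lt hmn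
  have hsplit : ∑ k ∈ Finset.range g, f k
      = ∑ k ∈ Finset.range g \ {m, n}, f k + (f m + f n) := by
    rw [← Finset.sum_sdiff hmem, Finset.sum_pair hne]
  -- bound on the pair
  have hpair : ‖f m + f n‖ ≤ 2 * (1 - 4 * t ^ 2) := by
    have hfm : f m = f n * eC δ := by
      rw [hf]
      simp only
      rw [← eC_add]
      congr 1
      rw [hδ, hA]
      ring
    have hfn : ‖f n‖ = 1 := by simp only [hf]; exact abs_eC _
    rw [hfm, ← mul_add_one, norm_mul, hfn, one_mul, add_comm]
    calc ‖1 + eC δ‖ = 2 * |Real.cos (π * δ)| := abs_one_add_eC δ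
      _ ≤ 2 * (1 - 4 * t ^ 2) := by
          have := abs_cos_pi_le δ
          linarith
  have hdiff : ‖∑ k ∈ Finset.range g \ {m, n}, f k‖ ≤ (g : ℝ) - 2 := by
    calc ‖∑ k ∈ Finset.range g \ {m, n}, f k‖
        ≤ ∑ k ∈ Finset.range g \ {m, n}, ‖f k‖ := by
          exact norm_sum_le _ _
      _ = ∑ k ∈ Finset.range g \ {m, n}, (1 : ℝ) := by
          apply Finset.sum_congr rfl; intro k _; exact abs_eC _
      _ = ((Finset.range g \ {m, n}).card : ℝ) := by simp
      _ = (g : ℝ) - 2 := by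
          rw [Finset.card_sdiff_of_subset hmem, Finset.card_pair hne]
          simp only [Finset.card_range]
          have : 2 ≤ g := hg
          push_cast [Nat.cast_sub this]
          ring
  have hstep : ‖∑ k ∈ Finset.range g, f k‖ ≤ (g : ℝ) - 8 * t ^ 2 := by
    rw [hsplit]
    calc ‖∑ k ∈ Finset.range g \ {m, n}, f k + (f m + f n)‖
        ≤ ‖∑ k ∈ Finset.range g \ {m, n}, f k‖ + ‖f m + f n‖ :=
          norm_add_le _ _
      _ ≤ ((g : ℝ) - 2) + 2 * (1 - 4 * t ^ 2) := add_le_add hdiff hpair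
      _ = (g : ℝ) - 8 * t ^ 2 := by ring
  have hgpos : (0 : ℝ) < g := by positivity
  have hexp : (g : ℝ) - 8 * t ^ 2 ≤ (g : ℝ) * Real.exp (-(8 / (g : ℝ)) * t ^ 2) := by
    have h1 : -(8 / (g : ℝ)) * t ^ 2 + 1 ≤ Real.exp (-(8 / (g : ℝ)) * t ^ 2) :=
      Real.add_one_le_exp _
    have h2 : (g : ℝ) * (-(8 / (g : ℝ)) * t ^ 2 + 1) = (g : ℝ) - 8 * t ^ 2 := by
      field_simp
      ring
    nlinarith
  exact le_trans hstep hexp
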